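/- Let V be a multiplicative unitary of multiplicity 1 on a finite-dimensional Hilbert space H, and let ψ be a state on L(H). Then the set G of eigenvalues of modulus 1 of L(ψ) = (ψ⊗id)(V) is a subgroup of the circle group U(1); in particular every eigenvalue of modulus 1 of L(ψ) is a root of unity. -/

import Mathlib

open scoped InnerProductSpace ComplexOrder

noncomputable section

namespace MU

variable {ι : Type*} [Fintype ι] [DecidableEq ι]

/-- The elementary tensor `f ⊗ g` of two vectors, in the model
`H ⊗ H = EuclideanSpace ℂ (ι × ι)`. -/
def tens (f g : EuclideanSpace ℂ ι) : EuclideanSpace ℂ (ι × ι) :=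
  WithLp.toLp 2 (fun p => f p.1 * g p.2)

/-- `g ↦ f ⊗ g` as a linear map. -/
def tensL (f : EuclideanSpace ℂ ι) :
    EuclideanSpace ℂ ι →ₗ[ℂ] EuclideanSpace ℂ (ι × ι) where
  toFun g := tens f g
  map_add' x y := by
    ext p; simp [tens]; ring
  map_smul' c x := by
    ext p; simp [tens]; ring

/-- `f ↦ f ⊗ g` as a linear map. -/
def tensR (g : EuclideanSpace ℂ ι) :
    EuclideanSpace ℂ ι →ₗ[ℂ] EuclideanSpace ℂ (ι × ι) where
  toFun f := tens f g
  map_add' x y := by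
    ext p; simp [tens]; ring
  map_smul' c x := by
    ext p; simp [tens]; ring

/-- Action of a matrix on a Euclidean space vector. -/
def appM {κ : Type*} [Fintype κ] (M : Matrix κ κ ℂ) (v : EuclideanSpace ℂ κ) :
    EuclideanSpace ℂ κ :=
  WithLp.toLp 2 (fun i => ∑ j, M i j * v j)

/-- Action of a matrix as a linear map on the Euclidean space. -/
def mact {κ : Type*} [Fintype κ] (M : Matrix κ κ ℂ) :
    EuclideanSpace ℂ κ →ₗ[ℂ] EuclideanSpace ℂ κ where
  toFun := appM M
  map_add' x y := by
    ext i; simp [appM, mul_add, Finset.sum_add_distrib]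
  map_smul' c x := by
    ext i; simp [appM, Finset.mul_sum]
    exact Finset.sum_congr rfl fun j _ => by ring

/-- The leg `V₁₂` on `H ⊗ H ⊗ H`. -/
def leg12 (V : Matrix (ι × ι) (ι × ι) ℂ) : Matrix (ι × ι × ι) (ι × ι × ι) ℂ :=
  fun p q => V (p.1, p.2.1) (q.1, q.2.1) * (if p.2.2 = q.2.2 then 1 else 0)

/-- The leg `V₁₃` on `H ⊗ H ⊗ H`. -/
def leg13 (V : Matrix (ι × ι) (ι × ι) ℂ) : Matrix (ι × ι × ι) (ι × ι × ι) ℂ :=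
  fun p q => V (p.1, p.2.2) (q.1, q.2.2) * (if p.2.1 = q.2.1 then 1 else 0)

/-- The leg `V₂₃` on `H ⊗ H ⊗ H`. -/
def leg23 (V : Matrix (ι × ι) (ι × ι) ℂ) : Matrix (ι × ι × ι) (ι × ι × ι) ℂ :=
  fun p q => V (p.2.1, p.2.2) (q.2.1, q.2.2) * (if p.1 = q.1 then 1 else 0)

/-- The pentagon equation `V₁₂ V₁₃ V₂₃ = V₂₃ V₁₂`. -/
def Pentagon (V : Matrix (ι × ι) (ι × ι) ℂ) : Prop :=
  leg12 V * leg13 V * leg23 V = leg23 V * leg12 V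

/-- `V` is a multiplicative unitary: a unitary satisfying the pentagon equation. -/
def IsMU (V : Matrix (ι × ι) (ι × ι) ℂ) : Prop :=
  V * V.conjTranspose = 1 ∧ V.conjTranspose * V = 1 ∧ Pentagon V

/-- `ξ` is a fixed vector for `V`. -/
def Fixed (V : Matrix (ι × ι) (ι × ι) ℂ) (ξ : EuclideanSpace ℂ ι) : Prop :=
  ∀ η, mact V (tens ξ η) = tens ξ η

/-- `ξ` is a cofixed vector for `V`. -/
def Cofixed (V : Matrix (ι × ι) (ι × ι) ℂ) (ξ : EuclideanSpace ℂ ι) : Prop :=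
  ∀ η, mact V (tens η ξ) = tens η ξ

/-- `V` has multiplicity 1, with fixed unit vector `e` and cofixed unit vector `eHat`. -/
def Mult1 (V : Matrix (ι × ι) (ι × ι) ℂ) (e eHat : EuclideanSpace ℂ ι) : Prop :=
  ‖e‖ = 1 ∧ ‖eHat‖ = 1 ∧ Fixed V e ∧ Cofixed V eHat ∧
    (∀ ξ, Fixed V ξ → ∃ c : ℂ, ξ = c • e) ∧
    (∀ ξ, Cofixed V ξ → ∃ c : ℂ, ξ = c • eHat)

/-- A pre-subgroup of `V` (with fixed vector `e`): a unit vector `f` with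
`⟨f,e⟩ > 0` and `V(f⊗f) = f⊗f`. -/
def IsPreSubgroup (V : Matrix (ι × ι) (ι × ι) ℂ) (e f : EuclideanSpace ℂ ι) : Prop :=
  ‖f‖ = 1 ∧ 0 < ⟪f, e⟫_ℂ ∧ mact V (tens f f) = tens f f

/-- The subspace `H^f = {η : V(f⊗η) = f⊗η}`. -/
def subUp (V : Matrix (ι × ι) (ι × ι) ℂ) (f : EuclideanSpace ℂ ι) :
    Submodule ℂ (EuclideanSpace ℂ ι) :=
  LinearMap.ker ((mact V).comp (tensL f) - tensL f)

/-- The subspace `H_f = {η : V(η⊗f) = η⊗f}`. -/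
def subDown (V : Matrix (ι × ι) (ι × ι) ℂ) (f : EuclideanSpace ℂ ι) :
    Submodule ℂ (EuclideanSpace ℂ ι) :=
  LinearMap.ker ((mact V).comp (tensR f) - tensR f)

/-- The slice `L(ω_{ξ,η}) = (ω_{ξ,η} ⊗ id)(V)`. -/
def Lslice (V : Matrix (ι × ι) (ι × ι) ℂ) (ξ η : EuclideanSpace ℂ ι) : Matrix ι ι ℂ :=
  fun a b => ∑ x, ∑ y, (starRingEnd ℂ) (ξ x) * η y * V (x, a) (y, b)

/-- The slice `ρ(ω_{ξ,η}) = (id ⊗ ω_{ξ,η})(V)`. -/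
def Rslice (V : Matrix (ι × ι) (ι × ι) ℂ) (ξ η : EuclideanSpace ℂ ι) : Matrix ι ι ℂ :=
  fun a b => ∑ x, ∑ y, (starRingEnd ℂ) (ξ x) * η y * V (a, x) (b, y)

/-- The slice `L(ω) = (ω ⊗ id)(V)` of a general linear functional `ω` on `L(H)`. -/
def LslF (V : Matrix (ι × ι) (ι × ι) ℂ) (ω : Matrix ι ι ℂ →ₗ[ℂ] ℂ) : Matrix ι ι ℂ :=
  fun a b => ω (fun x y => V (x, a) (y, b))

/-- A state on `L(H)`: a unital positive linear functional. -/
def IsState (ω : Matrix ι ι ℂ →ₗ[ℂ] ℂ) : Prop :=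
  ω 1 = 1 ∧ ∀ M : Matrix ι ι ℂ, M.PosSemidef → ∃ r : ℝ, 0 ≤ r ∧ ω M = r

-- ===================== auxiliary lemmas =====================
section Aux
set_option linter.unusedSectionVars false

open Finset

lemma mact_apply {κ : Type*} [Fintype κ] (M : Matrix κ κ ℂ) (v : EuclideanSpace ℂ κ) (i : κ) :
    mact M v i = ∑ j, M i j * v j := rfl

lemma tens_apply (f g : EuclideanSpace ℂ ι) (p : ι × ι) : tens f g p = f p.1 * g p.2 := rfl

lemma mact_mul {κ : Type*} [Fintype κ] (M N : Matrix κ κ ℂ) (v : EuclideanSpace ℂ κ) :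
    mact (M * N) v = mact M (mact N v) := by
  ext i
  simp only [mact_apply, Matrix.mul_apply, Finset.sum_mul, Finset.mul_sum]
  rw [Finset.sum_comm]
  exact Finset.sum_congr rfl fun j _ => Finset.sum_congr rfl fun k _ => by ring

lemma mact_one {κ : Type*} [Fintype κ] [DecidableEq κ] (v : EuclideanSpace ℂ κ) :
    mact (1 : Matrix κ κ ℂ) v = v := by
  ext i
  simp [mact_apply, Matrix.one_apply, ite_mul]

lemma euclid_inner {κ : Type*} [Fintype κ] (x y : EuclideanSpace ℂ κ) :
    ⟪x, y⟫_ℂ = ∑ i, (starRingEnd ℂ) (x i) * y i := by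
  rw [PiLp.inner_apply]
  exact Finset.sum_congr rfl fun i _ => by rw [RCLike.inner_apply]; ring

lemma inner_mact_mact {κ : Type*} [Fintype κ] [DecidableEq κ] {M : Matrix κ κ ℂ}
    (hM : M.conjTranspose * M = 1) (x y : EuclideanSpace ℂ κ) :
    ⟪mact M x, mact M y⟫_ℂ = ⟪x, y⟫_ℂ := by
  have h1 : ∀ j k, (∑ i, (starRingEnd ℂ) (M i j) * M i k) = if j = k then 1 else 0 := by
    intro j k
    have := congrFun (congrFun hM j) k
    simpa [Matrix.mul_apply, Matrix.conjTranspose_apply, Matrix.one_apply] using this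
  simp only [euclid_inner, mact_apply, map_sum, map_mul]
  calc ∑ i, (∑ j, (starRingEnd ℂ) (M i j) * (starRingEnd ℂ) (x j)) * (∑ k, M i k * y k)
      = ∑ i, ∑ j, ∑ k, ((starRingEnd ℂ) (x j) * y k) * ((starRingEnd ℂ) (M i j) * M i k) := by
        refine Finset.sum_congr rfl fun i _ => ?_
        rw [Finset.sum_mul_sum]
        exact Finset.sum_congr rfl fun j _ => Finset.sum_congr rfl fun k _ => by ring
    _ = ∑ j, ∑ k, ((starRingEnd ℂ) (x j) * y k) * (∑ i, (starRingEnd ℂ) (M i j) * M i k) := by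
        rw [Finset.sum_comm]
        refine Finset.sum_congr rfl fun j _ => ?_
        rw [Finset.sum_comm]
        exact Finset.sum_congr rfl fun k _ => by rw [Finset.mul_sum]
    _ = ∑ j, (starRingEnd ℂ) (x j) * y j := by
        refine Finset.sum_congr rfl fun j _ => ?_
        simp [h1, Finset.mul_sum, mul_ite]
  
lemma norm_mact {κ : Type*} [Fintype κ] [DecidableEq κ] {M : Matrix κ κ ℂ}
    (hM : M.conjTranspose * M = 1) (x : EuclideanSpace ℂ κ) :
    ‖mact M x‖ = ‖x‖ := by
  have := inner_mact_mact hM x x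
  rw [inner_self_eq_norm_sq_to_K, inner_self_eq_norm_sq_to_K] at this
  have h2 : (‖mact M x‖ : ℝ) ^ 2 = (‖x‖ : ℝ) ^ 2 := by exact_mod_cast this
  have h3 := norm_nonneg (mact M x)
  have h4 := norm_nonneg x
  nlinarith [sq_nonneg (‖mact M x‖ - ‖x‖), sq_nonneg (‖mact M x‖ + ‖x‖)]

lemma inner_tens (f g f' g' : EuclideanSpace ℂ ι) :
    ⟪tens f g, tens f' g'⟫_ℂ = ⟪f, f'⟫_ℂ * ⟪g, g'⟫_ℂ := by
  simp only [euclid_inner, tens_apply, map_mul]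
  rw [Fintype.sum_prod_type, Finset.sum_mul_sum]
  exact Finset.sum_congr rfl fun i _ => Finset.sum_congr rfl fun j _ => by ring

lemma tens_ne_zero {f g : EuclideanSpace ℂ ι} (hf : f ≠ 0) (hg : g ≠ 0) : tens f g ≠ 0 := by
  obtain ⟨p, hp⟩ : ∃ p, f p ≠ 0 := by
    by_contra h; push_neg at h; exact hf (by ext i; simpa using h i)
  obtain ⟨q, hq⟩ : ∃ q, g q ≠ 0 := by
    by_contra h; push_neg at h; exact hg (by ext i; simpa using h i)
  intro h
  have : tens f g (p, q) = (0 : EuclideanSpace ℂ (ι × ι)) (p, q) := by rw [h]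
  exact (mul_ne_zero hp hq) (by simpa [tens_apply] using this)

end Aux
section Legs
set_option linter.unusedSectionVars false
variable {ι : Type*} [Fintype ι] [DecidableEq ι]

lemma leg23_mul (A B : Matrix (ι × ι) (ι × ι) ℂ) :
    leg23 A * leg23 B = leg23 (A * B) := by
  ext p q
  rw [Matrix.mul_apply, Fintype.sum_prod_type]
  simp only [leg23, Matrix.mul_apply, ite_mul, mul_ite, zero_mul, mul_zero, mul_one, one_mul]
  rw [Finset.sum_comm]
  simp only [Finset.sum_ite_eq', Finset.sum_ite_eq, Finset.mem_univ, if_true]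
  by_cases h : p.1 = q.1
  · simp [h, Finset.mul_sum]
  · simp [h]

lemma leg23_one : leg23 (1 : Matrix (ι × ι) (ι × ι) ℂ) = 1 := by
  ext p q
  simp only [leg23, Matrix.one_apply]
  by_cases h1 : p = q
  · simp [h1]
  · have : ¬((p.2.1, p.2.2) = (q.2.1, q.2.2) ∧ p.1 = q.1) := by
      intro ⟨ha, hb⟩
      exact h1 (Prod.ext hb (by simpa [Prod.ext_iff] using ha))
    rcases not_and_or.mp this with h | h
    · simp [h, h1]
    · simp [h, h1]

lemma leg23_act (M : Matrix (ι × ι) (ι × ι) ℂ) (f : EuclideanSpace ℂ ι)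
    (T : EuclideanSpace ℂ (ι × ι)) :
    mact (leg23 M) (WithLp.toLp 2 (fun p : ι × ι × ι => f p.1 * T p.2) : EuclideanSpace ℂ (ι × ι × ι)) =
      (WithLp.toLp 2 (fun p : ι × ι × ι => f p.1 * mact M T p.2) : EuclideanSpace ℂ (ι × ι × ι)) := by
  ext p
  show (∑ q, leg23 M p q * (f q.1 * T q.2)) = f p.1 * ∑ r, M p.2 r * T r
  rw [Fintype.sum_prod_type]
  simp only [leg23, ite_mul, mul_ite, zero_mul, mul_zero, mul_one, one_mul, mul_assoc]
  rw [Finset.sum_comm]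
  simp only [Finset.sum_ite_eq, Finset.mem_univ, if_true]
  rw [Finset.mul_sum]
  refine Finset.sum_congr rfl fun r _ => ?_
  have : ((p.2.1 : ι), (p.2.2 : ι)) = p.2 := rfl
  rw [this]
  ring

lemma leg12_act (M : Matrix (ι × ι) (ι × ι) ℂ) (S : EuclideanSpace ℂ (ι × ι))
    (g : EuclideanSpace ℂ ι) :
    mact (leg12 M) (WithLp.toLp 2 (fun p : ι × ι × ι => S (p.1, p.2.1) * g p.2.2) : EuclideanSpace ℂ (ι × ι × ι)) =
      (WithLp.toLp 2 (fun p : ι × ι × ι => mact M S (p.1, p.2.1) * g p.2.2) : EuclideanSpace ℂ (ι × ι × ι)) := by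
  ext p
  show (∑ q, leg12 M p q * (S (q.1, q.2.1) * g q.2.2)) =
    (∑ r, M (p.1, p.2.1) r * S r) * g p.2.2
  rw [Fintype.sum_prod_type]
  have : ∀ q1 : ι, ∑ q2 : ι × ι, leg12 M p (q1, q2) * (S (q1, q2.1) * g q2.2)
      = ∑ a : ι, ∑ b : ι, leg12 M p (q1, (a, b)) * (S (q1, a) * g b) := fun q1 =>
    Fintype.sum_prod_type _
  simp only [this]
  simp only [leg12, ite_mul, mul_ite, zero_mul, mul_zero, mul_one, one_mul]
  simp only [Finset.sum_ite_eq, Finset.mem_univ, if_true]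
  rw [Fintype.sum_prod_type, Finset.sum_mul]
  refine Finset.sum_congr rfl fun a _ => ?_
  rw [Finset.sum_mul]
  refine Finset.sum_congr rfl fun b _ => ?_
  ring

lemma leg12_extract (M : Matrix (ι × ι) (ι × ι) ℂ) (W : EuclideanSpace ℂ (ι × ι × ι))
    (x y z : ι) :
    mact (leg12 M) W (x, (y, z)) =
      mact M (WithLp.toLp 2 (fun r : ι × ι => W (r.1, (r.2, z)))) (x, y) := by
  show (∑ q, leg12 M (x, (y, z)) q * W q) = ∑ r : ι × ι, M (x, y) r * W (r.1, (r.2, z))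
  rw [Fintype.sum_prod_type]
  have : ∀ q1 : ι, ∑ q2 : ι × ι, leg12 M (x, (y, z)) (q1, q2) * W (q1, q2)
      = ∑ a : ι, ∑ b : ι, leg12 M (x, (y, z)) (q1, (a, b)) * W (q1, (a, b)) := fun q1 =>
    Fintype.sum_prod_type _
  simp only [this]
  simp only [leg12, ite_mul, mul_ite, zero_mul, mul_zero, mul_one, one_mul]
  simp only [Finset.sum_ite_eq, Finset.mem_univ, if_true]
  rw [Fintype.sum_prod_type]

lemma leg13_act (M : Matrix (ι × ι) (ι × ι) ℂ) (f h k : EuclideanSpace ℂ ι) :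
    mact (leg13 M) (WithLp.toLp 2 (fun p : ι × ι × ι => f p.1 * (h p.2.1 * k p.2.2)) : EuclideanSpace ℂ (ι × ι × ι)) =
      (WithLp.toLp 2 (fun p : ι × ι × ι => mact M (tens f k) (p.1, p.2.2) * h p.2.1) : EuclideanSpace ℂ (ι × ι × ι)) := by
  ext p
  show (∑ q, leg13 M p q * (f q.1 * (h q.2.1 * k q.2.2))) =
    (∑ r : ι × ι, M (p.1, p.2.2) r * tens f k r) * h p.2.1
  rw [Fintype.sum_prod_type]
  have : ∀ q1 : ι, ∑ q2 : ι × ι, leg13 M p (q1, q2) * (f q1 * (h q2.1 * k q2.2))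
      = ∑ a : ι, ∑ b : ι, leg13 M p (q1, (a, b)) * (f q1 * (h a * k b)) := fun q1 =>
    Fintype.sum_prod_type _
  simp only [this]
  simp only [leg13, ite_mul, mul_ite, zero_mul, mul_zero, mul_one, one_mul]
  rw [Fintype.sum_prod_type, Finset.sum_mul]
  refine Finset.sum_congr rfl fun q1 _ => ?_
  rw [Finset.sum_comm]
  simp only [Finset.sum_ite_eq, Finset.mem_univ, if_true]
  rw [Finset.sum_mul]
  refine Finset.sum_congr rfl fun b _ => ?_
  simp only [tens_apply]
  ring

end Legs
section StateDecomp
set_option linter.unusedSectionVars false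
variable {ι : Type*} [Fintype ι] [DecidableEq ι]

lemma state_decomp [Nonempty ι] (ψ : Matrix ι ι ℂ →ₗ[ℂ] ℂ) (hψ : IsState ψ) :
    ∃ (n : ℕ) (u : Fin n → EuclideanSpace ℂ ι) (lam : Fin n → ℝ),
      (∀ i, 0 ≤ lam i) ∧ (∀ i, ‖u i‖ = 1) ∧ (∑ i, (lam i : ℂ)) = 1 ∧
      ∀ M : Matrix ι ι ℂ, ψ M = ∑ i, (lam i : ℂ) * ⟪u i, mact M (u i)⟫_ℂ := by
  classical
  set ρ : Matrix ι ι ℂ := fun i j => ψ (Matrix.single j i 1) with hρ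
  -- expansion of ψ through ρ
  have hexp : ∀ M : Matrix ι ι ℂ, ψ M = ∑ k, ∑ l, M k l * ρ l k := by
    intro M
    conv_lhs => rw [Matrix.matrix_eq_sum_single M]
    rw [map_sum]
    refine Finset.sum_congr rfl fun k _ => ?_
    rw [map_sum]
    refine Finset.sum_congr rfl fun l _ => ?_
    have : Matrix.single k l (M k l) = M k l • Matrix.single k l 1 := by
      rw [Matrix.smul_single, smul_eq_mul, mul_one]
    rw [this, map_smul, smul_eq_mul, hρ]
  -- quadratic form of ρ
  have hquad : ∀ v : EuclideanSpace ℂ ι,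
      ⟪v, mact ρ v⟫_ℂ = ψ (fun k l => v k * (starRingEnd ℂ) (v l) : Matrix ι ι ℂ) := by
    intro v
    erw [hexp]
    rw [euclid_inner]
    rw [Finset.sum_comm]
    refine Finset.sum_congr rfl fun l _ => ?_
    rw [mact_apply, Finset.mul_sum]
    refine Finset.sum_congr rfl fun k _ => ?_
    ring
  -- positivity of the quadratic form
  have hpos : ∀ v : EuclideanSpace ℂ ι, ∃ r : ℝ, 0 ≤ r ∧ ⟪v, mact ρ v⟫_ℂ = r := by
    intro v
    obtain ⟨i₀⟩ := ‹Nonempty ι›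
    set A : Matrix ι ι ℂ := fun i j => if i = i₀ then (starRingEnd ℂ) (v j) else 0 with hA
    have hAA : (fun k l => v k * (starRingEnd ℂ) (v l) : Matrix ι ι ℂ) = A.conjTranspose * A := by
      ext k l
      rw [Matrix.mul_apply]
      simp only [Matrix.conjTranspose_apply]
      simp [hA, Finset.sum_ite_eq, mul_comm]
    obtain ⟨r, hr, hr2⟩ := hψ.2 _ (hAA ▸ Matrix.posSemidef_conjTranspose_mul_self A)
    refine ⟨r, hr, ?_⟩
    rw [hquad]
    exact hr2
  -- symmetry
  have hsym : (mact ρ).IsSymmetric := by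
    rw [LinearMap.isSymmetric_iff_inner_map_self_real]
    intro v
    obtain ⟨r, _, hr2⟩ := hpos v
    have h1 : ⟪mact ρ v, v⟫_ℂ = (r : ℂ) := by
      rw [← inner_conj_symm, hr2, Complex.conj_ofReal]
    rw [h1, Complex.conj_ofReal]
  -- eigenbasis
  set n := Fintype.card ι with hn
  have hrank : Module.finrank ℂ (EuclideanSpace ℂ ι) = n := finrank_euclideanSpace
  set b := hsym.eigenvectorBasis hrank with hb
  set lam := hsym.eigenvalues hrank with hlam
  have happ : ∀ i, mact ρ (b i) = (lam i : ℂ) • b i := fun i =>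
    hsym.apply_eigenvectorBasis hrank i
  have hunit : ∀ i, ‖b i‖ = 1 := fun i => b.orthonormal.1 i
  have hinner_self : ∀ i, ⟪b i, b i⟫_ℂ = 1 := by
    intro i
    rw [inner_self_eq_norm_sq_to_K, hunit]
    norm_num
  have hlampos : ∀ i, 0 ≤ lam i := by
    intro i
    obtain ⟨r, hr, hr2⟩ := hpos (b i)
    have : ⟪b i, mact ρ (b i)⟫_ℂ = (lam i : ℂ) := by
      rw [happ, inner_smul_right, hinner_self, mul_one]
    rw [this] at hr2
    rw [Complex.ofReal_inj.mp hr2]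
    exact hr
  -- entry formula for ρ
  have hentry : ∀ l k, ρ l k = ∑ i, (lam i : ℂ) * ((starRingEnd ℂ) (b i k) * b i l) := by
    intro l k
    have h1 : mact ρ (EuclideanSpace.single k 1) l = ρ l k := by
      rw [mact_apply]
      simp [EuclideanSpace.single_apply]
    have h2 : mact ρ (EuclideanSpace.single k 1) =
        ∑ i, ⟪b i, EuclideanSpace.single k 1⟫_ℂ • ((lam i : ℂ) • b i) := by
      conv_lhs => rw [← b.sum_repr' (EuclideanSpace.single k 1)]
      rw [map_sum]
      refine Finset.sum_congr rfl fun i _ => ?_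
      rw [map_smul, happ]
    rw [← h1, h2]
    rw [WithLp.ofLp_sum, Finset.sum_apply]
    refine Finset.sum_congr rfl fun i _ => ?_
    rw [PiLp.smul_apply, PiLp.smul_apply, EuclideanSpace.inner_single_right]
    simp only [smul_eq_mul, one_mul]
    ring
  refine ⟨n, b, lam, hlampos, hunit, ?_, ?_⟩
  · have h1 := hψ.1
    rw [hexp] at h1
    have : ∀ k, ∑ l, (1 : Matrix ι ι ℂ) k l * ρ l k = ρ k k := by
      intro k
      simp [Matrix.one_apply, ite_mul]
    rw [Finset.sum_congr rfl fun k _ => this k] at h1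
    have h2 : ∑ k, ρ k k = ∑ i, (lam i : ℂ) := by
      rw [Finset.sum_congr rfl fun k (_ : k ∈ Finset.univ) => hentry k k]
      rw [Finset.sum_comm]
      refine Finset.sum_congr rfl fun i _ => ?_
      have : ∑ k, (lam i : ℂ) * ((starRingEnd ℂ) (b i k) * b i k) =
          (lam i : ℂ) * ⟪b i, b i⟫_ℂ := by
        rw [euclid_inner, Finset.mul_sum]
      rw [this, hinner_self, mul_one]
    rw [← h2, ← h1]
  · intro M
    rw [hexp]
    have : ∀ k l, M k l * ρ l k = ∑ i, (lam i : ℂ) * ((starRingEnd ℂ) (b i k) * M k l * b i l) := by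
      intro k l
      rw [hentry, Finset.mul_sum]
      refine Finset.sum_congr rfl fun i _ => ?_
      ring
    simp only [this]
    have hR : ∀ i : Fin n, (lam i : ℂ) * ⟪b i, mact M (b i)⟫_ℂ
        = ∑ k, ∑ l, (lam i : ℂ) * ((starRingEnd ℂ) (b i k) * M k l * b i l) := by
      intro i
      rw [euclid_inner, Finset.mul_sum]
      refine Finset.sum_congr rfl fun k _ => ?_
      rw [mact_apply, Finset.mul_sum, Finset.mul_sum]
      refine Finset.sum_congr rfl fun l _ => ?_
      ring
    rw [Finset.sum_congr rfl fun i (_ : i ∈ Finset.univ) => hR i]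
    rw [Finset.sum_congr rfl fun k (_ : k ∈ Finset.univ) =>
      (Finset.sum_comm : ∑ l : ι, ∑ i : Fin n, (lam i : ℂ) * ((starRingEnd ℂ) (b i k) * M k l * b i l) = _)]
    exact Finset.sum_comm
end StateDecomp
section EigenSlice
set_option linter.unusedSectionVars false
variable {ι : Type*} [Fintype ι] [DecidableEq ι]

lemma norm_one_of_inner_self {E : Type*} [NormedAddCommGroup E] [InnerProductSpace ℂ E]
    {x : E} (h : ⟪x, x⟫_ℂ = 1) : ‖x‖ = 1 := by
  rw [inner_self_eq_norm_sq_to_K] at h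
  have h2 : ((‖x‖ ^ 2 : ℝ) : ℂ) = ((1 : ℝ) : ℂ) := by push_cast; exact h
  have h3 : ‖x‖ ^ 2 = 1 := by exact_mod_cast h2
  nlinarith [norm_nonneg x]

lemma convex_eq {n : ℕ} (lam : Fin n → ℝ) (z : Fin n → ℂ) (c : ℂ)
    (h0 : ∀ i, 0 ≤ lam i) (hz : ∀ i, ‖z i‖ ≤ 1) (hc : ‖c‖ = 1)
    (hsum1 : (∑ i, (lam i : ℂ)) = 1) (hsum : (∑ i, (lam i : ℂ) * z i) = c) :
    ∀ i, lam i ≠ 0 → z i = c := by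
  have hlam1 : (∑ i, lam i) = 1 := by
    have : ((∑ i, lam i : ℝ) : ℂ) = 1 := by push_cast; exact hsum1
    exact_mod_cast this
  have hcc : c * (starRingEnd ℂ) c = 1 := by
    rw [Complex.mul_conj]
    norm_cast
    rw [Complex.normSq_eq_norm_sq, hc]
    norm_num
  have hre : ∀ i, ((starRingEnd ℂ) c * z i).re ≤ 1 := by
    intro i
    calc ((starRingEnd ℂ) c * z i).re ≤ ‖(starRingEnd ℂ) c * z i‖ :=
          Complex.re_le_norm _
      _ = ‖c‖ * ‖z i‖ := by
          rw [norm_mul, Complex.norm_conj]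
      _ ≤ 1 := by
          rw [hc, one_mul]
          exact hz i
  have key : (∑ i, lam i * (1 - ((starRingEnd ℂ) c * z i).re)) = 0 := by
    have h1 : ((starRingEnd ℂ) c * (∑ i, (lam i : ℂ) * z i)).re = 1 := by
      rw [hsum]
      have : (starRingEnd ℂ) c * c = 1 := by rw [mul_comm]; exact hcc
      rw [this]
      norm_num
    have h2 : ((starRingEnd ℂ) c * (∑ i, (lam i : ℂ) * z i)).re
        = ∑ i, lam i * ((starRingEnd ℂ) c * z i).re := by
      rw [Finset.mul_sum, Complex.re_sum]
      refine Finset.sum_congr rfl fun i _ => ?_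
      have : (starRingEnd ℂ) c * ((lam i : ℂ) * z i) = (lam i : ℂ) * ((starRingEnd ℂ) c * z i) := by ring
      rw [this, Complex.re_ofReal_mul]
    rw [h2] at h1
    have : (∑ i, lam i * (1 - ((starRingEnd ℂ) c * z i).re))
        = (∑ i, lam i) - ∑ i, lam i * ((starRingEnd ℂ) c * z i).re := by
      rw [← Finset.sum_sub_distrib]
      exact Finset.sum_congr rfl fun i _ => by ring
    rw [this, hlam1, h1, sub_self]
  have hterm : ∀ i ∈ Finset.univ, (0:ℝ) ≤ lam i * (1 - ((starRingEnd ℂ) c * z i).re) :=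
    fun i _ => mul_nonneg (h0 i) (by linarith [hre i])
  have hzero := (Finset.sum_eq_zero_iff_of_nonneg hterm).mp key
  intro i hi
  have h3 : ((starRingEnd ℂ) c * z i).re = 1 := by
    have := hzero i (Finset.mem_univ i)
    rcases mul_eq_zero.mp this with h | h
    · exact absurd h hi
    · linarith
  -- show conj c * z i = 1
  set w := (starRingEnd ℂ) c * z i with hw
  have habs : ‖w‖ ≤ 1 := by
    rw [hw, norm_mul, Complex.norm_conj]
    rw [hc, one_mul]
    exact hz i
  have him : w.im = 0 := by
    have h5 : Complex.normSq w = w.re ^ 2 + w.im ^ 2 := by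
      rw [Complex.normSq_apply]; ring
    have h4 : w.re ^ 2 + w.im ^ 2 ≤ 1 := by
      nlinarith [habs, Complex.sq_norm w, norm_nonneg w, h5]
    nlinarith [h3, sq_nonneg w.im]
  have hw1 : w = 1 := Complex.ext (by rw [h3]; rfl) (by rw [him]; rfl)
  calc z i = (c * (starRingEnd ℂ) c) * z i := by rw [hcc, one_mul]
    _ = c * w := by rw [hw]; ring
    _ = c := by rw [hw1, mul_one]

variable (V : Matrix (ι × ι) (ι × ι) ℂ) (ψ : Matrix ι ι ℂ →ₗ[ℂ] ℂ)
  {n : ℕ} (u : Fin n → EuclideanSpace ℂ ι) (lam : Fin n → ℝ)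

/-- slice-eigenvector implies eigenvector of `L(ψ)` -/
lemma slice_to_eigen
    (hsum : (∑ i, (lam i : ℂ)) = 1) (hu : ∀ i, ‖u i‖ = 1)
    (hdec : ∀ M : Matrix ι ι ℂ, ψ M = ∑ i, (lam i : ℂ) * ⟪u i, mact M (u i)⟫_ℂ)
    (c : ℂ) (ξ : EuclideanSpace ℂ ι)
    (hyp : ∀ i, lam i ≠ 0 → mact V (tens (u i) ξ) = c • tens (u i) ξ) :
    mact (LslF V ψ) ξ = c • ξ := by
  ext a
  have lhs1 : mact (LslF V ψ) ξ a = ψ (fun x y => ∑ b, V (x, a) (y, b) * ξ b) := by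
    rw [mact_apply]
    have hM : (fun x y => ∑ b, V (x, a) (y, b) * ξ b : Matrix ι ι ℂ)
        = ∑ b, ξ b • (fun x y => V (x, a) (y, b) : Matrix ι ι ℂ) := by
      ext x y
      rw [Finset.sum_apply, Finset.sum_apply]
      exact Finset.sum_congr rfl fun b _ => by simp [Matrix.smul_apply, smul_eq_mul, mul_comm]
    erw [hM, map_sum]
    refine Finset.sum_congr rfl fun b _ => ?_
    erw [map_smul, smul_eq_mul, mul_comm]
    rfl
  erw [lhs1, hdec]
  have hterm : ∀ i, lam i ≠ 0 →
      ⟪u i, mact (fun x y => ∑ b, V (x, a) (y, b) * ξ b) (u i)⟫_ℂ = c * ξ a := by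
    intro i hi
    have hcomp : ∀ x, (∑ y, (∑ b, V (x, a) (y, b) * ξ b) * u i y) = c * (u i x * ξ a) := by
      intro x
      have h0 : mact V (tens (u i) ξ) (x, a) = (c • tens (u i) ξ) (x, a) := by rw [hyp i hi]
      rw [mact_apply] at h0
      simp only [PiLp.smul_apply, smul_eq_mul] at h0
      have this2 : (∑ j : ι × ι, V (x, a) j * (u i j.1 * ξ j.2)) = c * (u i x * ξ a) := h0
      rw [← this2, Fintype.sum_prod_type]
      refine Finset.sum_congr rfl fun y _ => ?_
      rw [Finset.sum_mul]
      exact Finset.sum_congr rfl fun b _ => by ring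
    rw [euclid_inner]
    have : ∀ x, (starRingEnd ℂ) (u i x) * mact (fun x y => ∑ b, V (x, a) (y, b) * ξ b) (u i) x
        = (starRingEnd ℂ) (u i x) * (c * (u i x * ξ a)) := by
      intro x
      erw [mact_apply, hcomp x]
    rw [Finset.sum_congr rfl fun x _ => this x]
    have : (∑ x, (starRingEnd ℂ) (u i x) * (c * (u i x * ξ a)))
        = (c * ξ a) * ∑ x, (starRingEnd ℂ) (u i x) * u i x := by
      rw [Finset.mul_sum]
      exact Finset.sum_congr rfl fun x _ => by ring
    rw [this, ← euclid_inner, inner_self_eq_norm_sq_to_K, hu i]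
    push_cast
    ring
  have : (∑ i, (lam i : ℂ) * ⟪u i, mact (fun x y => ∑ b, V (x, a) (y, b) * ξ b) (u i)⟫_ℂ)
      = ∑ i, (lam i : ℂ) * (c * ξ a) := by
    refine Finset.sum_congr rfl fun i _ => ?_
    by_cases hi : lam i = 0
    · rw [hi]; push_cast; ring
    · rw [hterm i hi]
  rw [this, ← Finset.sum_mul, hsum, one_mul]
  simp [PiLp.smul_apply, smul_eq_mul]

end EigenSlice
section EigenSlice2
set_option linter.unusedSectionVars false
variable {ι : Type*} [Fintype ι] [DecidableEq ι]
variable (V : Matrix (ι × ι) (ι × ι) ℂ) (ψ : Matrix ι ι ℂ →ₗ[ℂ] ℂ)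
  {n : ℕ} (u : Fin n → EuclideanSpace ℂ ι) (lam : Fin n → ℝ)

lemma eigen_to_slice
    (hV2 : V.conjTranspose * V = 1)
    (hsum : (∑ i, (lam i : ℂ)) = 1) (h0 : ∀ i, 0 ≤ lam i) (hu : ∀ i, ‖u i‖ = 1)
    (hdec : ∀ M : Matrix ι ι ℂ, ψ M = ∑ i, (lam i : ℂ) * ⟪u i, mact M (u i)⟫_ℂ)
    (c : ℂ) (hc : ‖c‖ = 1) (ξ : EuclideanSpace ℂ ι) (hξ : ‖ξ‖ = 1)
    (heig : mact (LslF V ψ) ξ = c • ξ) :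
    ∀ i, lam i ≠ 0 → mact V (tens (u i) ξ) = c • tens (u i) ξ := by
  set z : Fin n → ℂ := fun i => ⟪tens (u i) ξ, mact V (tens (u i) ξ)⟫_ℂ with hz
  have hwnorm : ∀ i, ‖tens (u i) ξ‖ = 1 := by
    intro i
    refine norm_one_of_inner_self ?_
    rw [inner_tens, inner_self_eq_norm_sq_to_K, inner_self_eq_norm_sq_to_K, hu i, hξ]
    norm_num
  have hzb : ∀ i, ‖z i‖ ≤ 1 := by
    intro i
    calc ‖z i‖ ≤ ‖tens (u i) ξ‖ * ‖mact V (tens (u i) ξ)‖ := norm_inner_le_norm _ _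
      _ = 1 := by rw [norm_mact hV2, hwnorm i]; norm_num
  -- the matrix K
  set K : Matrix ι ι ℂ :=
    fun x y => ∑ a, ∑ b, (starRingEnd ℂ) (ξ a) * ξ b * V (x, a) (y, b) with hK
  have hKsum : K = ∑ a, ∑ b,
      ((starRingEnd ℂ) (ξ a) * ξ b) • (fun x y => V (x, a) (y, b) : Matrix ι ι ℂ) := by
    ext x y
    rw [Finset.sum_apply, Finset.sum_apply]
    refine Finset.sum_congr rfl fun a _ => ?_
    rw [Finset.sum_apply, Finset.sum_apply]
    exact Finset.sum_congr rfl fun b _ => rfl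
  have hinnerK : ⟪ξ, mact (LslF V ψ) ξ⟫_ℂ = ψ K := by
    erw [hKsum, map_sum]
    rw [euclid_inner]
    refine Finset.sum_congr rfl fun a _ => ?_
    erw [map_sum, mact_apply, Finset.mul_sum]
    refine Finset.sum_congr rfl fun b _ => ?_
    erw [map_smul, smul_eq_mul]
    show (starRingEnd ℂ) (ξ a) * (LslF V ψ a b * ξ b) = _ * ψ (fun x y => V (x, a) (y, b))
    show _ = (starRingEnd ℂ) (ξ a) * ξ b * LslF V ψ a b
    ring
  have hci : ⟪ξ, mact (LslF V ψ) ξ⟫_ℂ = c := by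
    rw [heig, inner_smul_right, inner_self_eq_norm_sq_to_K, hξ]
    norm_num
  have hKz : ∀ i, ⟪u i, mact K (u i)⟫_ℂ = z i := by
    intro i
    rw [euclid_inner]
    have lhs : ∀ x, (starRingEnd ℂ) (u i x) * mact K (u i) x
        = ∑ a, ∑ y, ∑ b, (starRingEnd ℂ) (u i x) * (starRingEnd ℂ) (ξ a)
            * V (x, a) (y, b) * (u i y * ξ b) := by
      intro x
      rw [mact_apply]
      have e1 : (∑ y, K x y * u i y)
          = ∑ a, ∑ y, ∑ b, (starRingEnd ℂ) (ξ a) * ξ b * V (x, a) (y, b) * u i y := by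
        rw [Finset.sum_comm]
        refine Finset.sum_congr rfl fun y _ => ?_
        rw [hK, Finset.sum_mul]
        exact Finset.sum_congr rfl fun a _ => by rw [Finset.sum_mul]
      rw [e1, Finset.mul_sum]
      refine Finset.sum_congr rfl fun a _ => ?_
      rw [Finset.mul_sum]
      refine Finset.sum_congr rfl fun y _ => ?_
      rw [Finset.mul_sum]
      exact Finset.sum_congr rfl fun b _ => by ring
    rw [Finset.sum_congr rfl fun x _ => lhs x]
    rw [hz]
    show _ = ⟪tens (u i) ξ, mact V (tens (u i) ξ)⟫_ℂ
    rw [euclid_inner]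
    rw [Fintype.sum_prod_type]
    refine Finset.sum_congr rfl fun x _ => ?_
    refine Finset.sum_congr rfl fun a _ => ?_
    rw [mact_apply, Fintype.sum_prod_type]
    rw [Finset.mul_sum]
    refine Finset.sum_congr rfl fun y _ => ?_
    rw [Finset.mul_sum]
    refine Finset.sum_congr rfl fun b _ => ?_
    show (starRingEnd ℂ) (u i x) * (starRingEnd ℂ) (ξ a) * V (x, a) (y, b) * (u i y * ξ b)
      = (starRingEnd ℂ) (tens (u i) ξ (x, a)) * (V (x, a) (y, b) * tens (u i) ξ (y, b))
    rw [tens_apply, tens_apply, map_mul]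
    ring
  have hsum2 : (∑ i, (lam i : ℂ) * z i) = c := by
    rw [← hci, hinnerK, hdec]
    exact Finset.sum_congr rfl fun i _ => by rw [hKz i]
  have hzc := convex_eq lam z c h0 hzb hc hsum hsum2
  intro i hi
  have hzi : z i = c := hzc i hi
  -- now the geometric argument
  set w := tens (u i) ξ with hwdef
  have h1 : ⟪w, mact V w⟫_ℂ = c := hzi
  have hnw : ⟪w, w⟫_ℂ = 1 := by
    rw [inner_self_eq_norm_sq_to_K, hwnorm i]
    norm_num
  have hnVw : ⟪mact V w, mact V w⟫_ℂ = 1 := by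
    rw [inner_mact_mact hV2]
    exact hnw
  have hdiff : ⟪mact V w - c • w, mact V w - c • w⟫_ℂ = 0 := by
    rw [inner_sub_left, inner_sub_right, inner_sub_right]
    rw [inner_smul_left, inner_smul_right, inner_smul_left, inner_smul_right]
    rw [hnVw, hnw, h1]
    have h2 : ⟪mact V w, w⟫_ℂ = (starRingEnd ℂ) c := by
      rw [← inner_conj_symm, h1]
    rw [h2]
    have hcc : (starRingEnd ℂ) c * c = 1 := by
      rw [mul_comm, Complex.mul_conj]
      norm_cast
      rw [Complex.normSq_eq_norm_sq, hc]
      norm_num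
    rw [hcc]
    ring_nf
  have := inner_self_eq_zero.mp hdiff
  have : mact V w = c • w := by
    have h3 := sub_eq_zero.mp this
    exact h3
  exact this

end EigenSlice2
section ProductLemma
set_option linter.unusedSectionVars false
variable {ι : Type*} [Fintype ι] [DecidableEq ι]

lemma slice_mul (V : Matrix (ι × ι) (ι × ι) ℂ)
    (hV1 : V * V.conjTranspose = 1) (hV2 : V.conjTranspose * V = 1) (hpent : Pentagon V)
    {n : ℕ} (u : Fin n → EuclideanSpace ℂ ι) (lam : Fin n → ℝ)
    (a b : ℂ) (ξ ξ' : EuclideanSpace ℂ ι) (hξ : ξ ≠ 0) (hξ' : ξ' ≠ 0)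
    (ha : ∀ i, lam i ≠ 0 → mact V (tens (u i) ξ) = a • tens (u i) ξ)
    (hb : ∀ i, lam i ≠ 0 → mact V (tens (u i) ξ') = b • tens (u i) ξ') :
    ∃ η : EuclideanSpace ℂ ι, η ≠ 0 ∧
      ∀ i, lam i ≠ 0 → mact V (tens (u i) η) = (a * b) • tens (u i) η := by
  set R : EuclideanSpace ℂ (ι × ι) := mact V.conjTranspose (tens ξ ξ') with hRdef
  have hR : mact V R = tens ξ ξ' := by
    rw [hRdef, ← mact_mul, hV1, mact_one]
  have hRne : R ≠ 0 := by
    intro h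
    have : tens ξ ξ' = 0 := by rw [← hR, h, map_zero]
    exact tens_ne_zero hξ hξ' this
  obtain ⟨p₀, hp₀⟩ : ∃ p₀, R p₀ ≠ 0 := by
    by_contra h; push_neg at h; exact hRne (by ext p; simpa using h p)
  set z₀ := p₀.2 with hz₀
  set η : EuclideanSpace ℂ ι := WithLp.toLp 2 (fun y => R (y, z₀)) with hη
  have hηne : η ≠ 0 := by
    intro h
    apply hp₀
    have : η p₀.1 = (0 : EuclideanSpace ℂ ι) p₀.1 := by rw [h]
    simpa [hη] using this
  refine ⟨η, hηne, ?_⟩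
  intro i hi
  -- main claim: mact (leg12 V) (w i) = (a*b) • w i
  set w : EuclideanSpace ℂ (ι × ι × ι) := WithLp.toLp 2 (fun p : ι × ι × ι => u i p.1 * R p.2) with hw
  set w₀ : EuclideanSpace ℂ (ι × ι × ι) := WithLp.toLp 2 (fun p : ι × ι × ι => u i p.1 * tens ξ ξ' p.2) with hw₀
  have step1 : mact (leg23 V) w = w₀ := by
    rw [hw, leg23_act, hR]
  have step2 : mact (leg13 V) w₀ = b • w₀ := by
    have e : w₀ = (WithLp.toLp 2 (fun p : ι × ι × ι => u i p.1 * (ξ p.2.1 * ξ' p.2.2)) : EuclideanSpace ℂ (ι × ι × ι)) := rfl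
    rw [e, leg13_act]
    ext p
    rw [hb i hi]
    show (b • tens (u i) ξ') (p.1, p.2.2) * ξ p.2.1 = (b • (WithLp.toLp 2 (fun p : ι × ι × ι => u i p.1 * (ξ p.2.1 * ξ' p.2.2)) : EuclideanSpace ℂ (ι × ι × ι))) p
    simp only [PiLp.smul_apply, Pi.smul_apply, smul_eq_mul, tens_apply]
    ring
  have step3 : mact (leg12 V) w₀ = a • w₀ := by
    have e : w₀ = (WithLp.toLp 2 (fun p : ι × ι × ι => tens (u i) ξ (p.1, p.2.1) * ξ' p.2.2) :
        EuclideanSpace ℂ (ι × ι × ι)) := by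
      ext p
      show u i p.1 * tens ξ ξ' p.2 = tens (u i) ξ (p.1, p.2.1) * ξ' p.2.2
      rw [tens_apply, tens_apply]
      ring
    rw [e, leg12_act]
    ext p
    rw [ha i hi]
    show (a • tens (u i) ξ) (p.1, p.2.1) * ξ' p.2.2 = (a • (WithLp.toLp 2 (fun p : ι × ι × ι => tens (u i) ξ (p.1, p.2.1) * ξ' p.2.2) : EuclideanSpace ℂ (ι × ι × ι))) p
    simp only [PiLp.smul_apply, Pi.smul_apply, smul_eq_mul, tens_apply]
    ring
  have pent : mact (leg23 V) (mact (leg12 V) w) = (a * b) • w₀ := by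
    have h1 : mact (leg12 V * leg13 V * leg23 V) w = mact (leg23 V * leg12 V) w := by
      rw [hpent]
    rw [mact_mul, mact_mul, step1, step2, map_smul, step3, smul_smul, mul_comm b a] at h1
    rw [mact_mul] at h1
    exact h1.symm
  have main : mact (leg12 V) w = (a * b) • w := by
    have h2 := congrArg (mact (leg23 V.conjTranspose)) pent
    rw [← mact_mul, leg23_mul, hV2, leg23_one, mact_one] at h2
    rw [map_smul] at h2
    have h3 : mact (leg23 V.conjTranspose) w₀ = w := by
      rw [hw₀, leg23_act]
    rw [h3] at h2
    exact h2
  -- extract the slice at z₀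
  ext q
  have h4 : mact (leg12 V) w (q.1, (q.2, z₀)) = ((a * b) • w) (q.1, (q.2, z₀)) := by rw [main]
  have h5 : mact (leg12 V) w (q.1, (q.2, z₀)) =
      mact V (WithLp.toLp 2 (fun r : ι × ι => w (r.1, (r.2, z₀)))) (q.1, q.2) := leg12_extract V w q.1 q.2 z₀
  have h6 : (WithLp.toLp 2 (fun r : ι × ι => w (r.1, (r.2, z₀)))) = tens (u i) η := rfl
  rw [h5, h6] at h4
  have h7 : ((a * b) • w) (q.1, (q.2, z₀)) = ((a * b) • tens (u i) η) (q.1, q.2) := by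
    simp only [PiLp.smul_apply, smul_eq_mul]
    rfl
  rw [h7] at h4
  have : (q.1, q.2) = q := rfl
  rw [this] at h4
  exact h4

end ProductLemma
/-- the modulus-one eigenvalues of `L(ψ)` form a subgroup of the
circle; in particular they are roots of unity. -/
theorem eigenvalues_modulus_one_subgroup {ι : Type*} [Fintype ι] [DecidableEq ι] [Nonempty ι]
    (V : Matrix (ι × ι) (ι × ι) ℂ) (hV : IsMU V)
    (e eHat : EuclideanSpace ℂ ι) (hm : Mult1 V e eHat)
    (ψ : Matrix ι ι ℂ →ₗ[ℂ] ℂ) (hψ : IsState ψ) :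
    ((1 : ℂ) ∈ {c : ℂ | ‖c‖ = 1 ∧ Module.End.HasEigenvalue (mact (LslF V ψ)) c}) ∧
    (∀ a ∈ {c : ℂ | ‖c‖ = 1 ∧ Module.End.HasEigenvalue (mact (LslF V ψ)) c},
      ∀ b ∈ {c : ℂ | ‖c‖ = 1 ∧ Module.End.HasEigenvalue (mact (LslF V ψ)) c},
        a * b ∈ {c : ℂ | ‖c‖ = 1 ∧ Module.End.HasEigenvalue (mact (LslF V ψ)) c}) ∧
    (∀ a ∈ {c : ℂ | ‖c‖ = 1 ∧ Module.End.HasEigenvalue (mact (LslF V ψ)) c},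
        a⁻¹ ∈ {c : ℂ | ‖c‖ = 1 ∧ Module.End.HasEigenvalue (mact (LslF V ψ)) c}) ∧
    (∀ a ∈ {c : ℂ | ‖c‖ = 1 ∧ Module.End.HasEigenvalue (mact (LslF V ψ)) c},
        ∃ k : ℕ, 0 < k ∧ a ^ k = 1) := by
  obtain ⟨hV1, hV2, hpent⟩ := hV
  obtain ⟨hne, hEhatne, hfix, hcofix, -, -⟩ := hm
  obtain ⟨n, u, lam, hlam0, hu, hsum, hdec⟩ := state_decomp ψ hψ
  set G := {c : ℂ | ‖c‖ = 1 ∧ Module.End.HasEigenvalue (mact (LslF V ψ)) c} with hG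
  -- some lam is nonzero
  obtain ⟨i₀, hi₀⟩ : ∃ i, lam i ≠ 0 := by
    by_contra h
    push_neg at h
    rw [Finset.sum_congr rfl (fun i _ => by rw [h i]; norm_num : ∀ i ∈ Finset.univ, ((lam i : ℂ)) = 0)] at hsum
    simp at hsum
  have hu0 : ∀ i, u i ≠ 0 := by
    intro i h
    have := hu i
    rw [h, norm_zero] at this
    norm_num at this
  -- membership from slice eigenvectors
  have hG2 : ∀ (c : ℂ) (ξ : EuclideanSpace ℂ ι), ξ ≠ 0 →
      (∀ i, lam i ≠ 0 → mact V (tens (u i) ξ) = c • tens (u i) ξ) → c ∈ G := by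
    intro c ξ hξ hsl
    have heig : mact (LslF V ψ) ξ = c • ξ := slice_to_eigen V ψ u lam hsum hu hdec c ξ hsl
    have hcnorm : ‖c‖ = 1 := by
      have hw : tens (u i₀) ξ ≠ 0 := tens_ne_zero (hu0 i₀) hξ
      have h1 : ‖mact V (tens (u i₀) ξ)‖ = ‖tens (u i₀) ξ‖ := norm_mact hV2 _
      rw [hsl i₀ hi₀, norm_smul] at h1
      have hwn : ‖tens (u i₀) ξ‖ ≠ 0 := norm_ne_zero_iff.mpr hw
      field_simp at h1
      exact h1
    exact ⟨hcnorm, Module.End.hasEigenvalue_of_hasEigenvector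
      ⟨Module.End.mem_eigenspace_iff.mpr heig, hξ⟩⟩
  -- slice eigenvectors from membership
  have hG1 : ∀ c ∈ G, ∃ ξ : EuclideanSpace ℂ ι, ξ ≠ 0 ∧
      ∀ i, lam i ≠ 0 → mact V (tens (u i) ξ) = c • tens (u i) ξ := by
    intro c hc
    obtain ⟨hcn, hce⟩ := hc
    obtain ⟨v, hv⟩ := hce.exists_hasEigenvector
    have hv1 : mact (LslF V ψ) v = c • v := Module.End.mem_eigenspace_iff.mp hv.1
    have hv0 : v ≠ 0 := hv.2
    set ξ : EuclideanSpace ℂ ι := (‖v‖ : ℂ)⁻¹ • v with hξdef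
    have hvn : (‖v‖ : ℂ) ≠ 0 :=
      Complex.ofReal_ne_zero.mpr (norm_ne_zero_iff.mpr hv0)
    have hξ0 : ξ ≠ 0 := smul_ne_zero (inv_ne_zero hvn) hv0
    have hξn : ‖ξ‖ = 1 := by
      have hvnR : ‖v‖ ≠ 0 := norm_ne_zero_iff.mpr hv0
      rw [hξdef, norm_smul, norm_inv, Complex.norm_real, Real.norm_eq_abs,
        abs_of_nonneg (norm_nonneg v)]
      field_simp
    have hξeig : mact (LslF V ψ) ξ = c • ξ := by
      rw [hξdef, map_smul, hv1, smul_comm]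
    exact ⟨ξ, hξ0, eigen_to_slice V ψ u lam hV2 hsum hlam0 hu hdec c hcn ξ hξn hξeig⟩
  -- 1 ∈ G
  have h1G : (1 : ℂ) ∈ G := by
    refine hG2 1 eHat ?_ ?_
    · intro h
      rw [h, norm_zero] at hEhatne
      norm_num at hEhatne
    · intro i _
      rw [one_smul]
      exact hcofix (u i)
  -- closure under multiplication
  have hmulG : ∀ a ∈ G, ∀ b ∈ G, a * b ∈ G := by
    intro a ha b hb
    obtain ⟨ξ, hξ0, hξ⟩ := hG1 a ha
    obtain ⟨ξ', hξ'0, hξ'⟩ := hG1 b hb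
    obtain ⟨η, hη0, hη⟩ := slice_mul V hV1 hV2 hpent u lam a b ξ ξ' hξ0 hξ'0 hξ hξ'
    exact hG2 (a * b) η hη0 hη
  -- G is finite
  have hGfin : G.Finite := by
    have hmp : minpoly ℂ (mact (LslF V ψ)) ≠ 0 := minpoly.ne_zero_of_finite ℂ _
    refine Set.Finite.subset (Polynomial.finite_setOf_isRoot hmp) ?_
    intro c hc
    exact Module.End.hasEigenvalue_iff_isRoot.mp hc.2
  -- powers stay in G
  have hpowG : ∀ a ∈ G, ∀ m : ℕ, a ^ (m + 1) ∈ G := by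
    intro a ha m
    induction m with
    | zero => simpa using ha
    | succ k ih =>
        have := hmulG _ ih _ ha
        rw [← pow_succ] at this
        exact this
  -- roots of unity
  have hroot : ∀ a ∈ G, ∃ k : ℕ, 0 < k ∧ a ^ k = 1 := by
    intro a ha
    have ha0 : a ≠ 0 := by
      intro h
      have h1 := ha.1
      rw [h, norm_zero] at h1
      norm_num at h1
    obtain ⟨m, -, l, -, hml, heq⟩ :=
      Set.infinite_univ.exists_ne_map_eq_of_mapsTo
        (f := fun m : ℕ => a ^ (m + 1)) (fun m _ => hpowG a ha m) hGfin
    rcases hml.lt_or_gt with h | h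
    · refine ⟨l - m, Nat.sub_pos_of_lt h, ?_⟩
      have : a ^ (m + 1) * a ^ (l - m) = a ^ (m + 1) * 1 := by
        rw [mul_one, ← pow_add]
        rw [show m + 1 + (l - m) = l + 1 by omega]
        exact heq.symm
      exact mul_left_cancel₀ (pow_ne_zero _ ha0) this
    · refine ⟨m - l, Nat.sub_pos_of_lt h, ?_⟩
      have : a ^ (l + 1) * a ^ (m - l) = a ^ (l + 1) * 1 := by
        rw [mul_one, ← pow_add]
        rw [show l + 1 + (m - l) = m + 1 by omega]
        exact heq
      exact mul_left_cancel₀ (pow_ne_zero _ ha0) this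
  -- inverses
  have hinvG : ∀ a ∈ G, a⁻¹ ∈ G := by
    intro a ha
    obtain ⟨k, hk0, hak⟩ := hroot a ha
    have ha0 : a ≠ 0 := by
      intro h
      have h1 := ha.1
      rw [h, norm_zero] at h1
      norm_num at h1
    have hinv : a⁻¹ = a ^ (k - 1) := by
      have h1 : a ^ (k - 1) * a = 1 := by
        rw [← pow_succ, show k - 1 + 1 = k by omega, hak]
      exact (eq_inv_of_mul_eq_one_left h1).symm
    rw [hinv]
    rcases Nat.lt_or_ge k 2 with h | h
    · rw [show k - 1 = 0 by omega, pow_zero]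
      exact h1G
    · rw [show k - 1 = (k - 2) + 1 by omega]
      exact hpowG a ha (k - 2)
  exact ⟨h1G, hmulG, hinvG, hroot⟩

end MU
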